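/- Let p be an odd prime and d an integer with p ∤ d such that the Legendre symbol (d/p) equals −1. Then in ℤ[√d][X] one has (x^{p−1} − 1) · ∏_{m=1}^{p−1} ∏_{n=1}^{p−1} (x − (m + n√d)) ≡ (x^p + x)^{p−1} − 1 (mod p). -/
import Mathlib
open Polynomial Finset

theorem prod_univ_X_sub_C (F : Type*) [Field F] [Fintype F] :
    ∏ a : F, (X - C a) = X ^ Fintype.card F - X := by
  have h := FiniteField.roots_X_pow_card_sub_X F
  have h1 : (1 : WithBot ℕ) < (Fintype.card F : ℕ) := by
    exact_mod_cast Fintype.one_lt_card (α := F)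
  have hm : (X ^ Fintype.card F - X : F[X]).Monic :=
    monic_X_pow_sub (degree_X_le.trans_lt h1)
  have hd := FiniteField.X_pow_card_sub_X_natDegree_eq F (Fintype.one_lt_card (α := F))
  have key := prod_multiset_X_sub_C_of_monic_of_roots_card_eq hm (by rw [h, hd]; simp)
  rw [h] at key
  rw [← key, Finset.prod_eq_multiset_prod]

theorem zmod_prod_erase (p : ℕ) [Fact p.Prime] :
    ∏ a ∈ ((univ : Finset (ZMod p)).erase 0), (X - C a) = X ^ (p - 1) - 1 := by
  have h := prod_univ_X_sub_C (ZMod p)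
  rw [ZMod.card] at h
  have hp1 : 1 ≤ p := (Fact.out : p.Prime).one_lt.le
  apply mul_left_cancel₀ (X_ne_zero (R := ZMod p))
  calc (X : (ZMod p)[X]) * ∏ a ∈ ((univ : Finset (ZMod p)).erase 0), (X - C a)
      = (X - C 0) * ∏ a ∈ ((univ : Finset (ZMod p)).erase 0), (X - C a) := by
        rw [C_0, sub_zero]
    _ = ∏ a : ZMod p, (X - C a) :=
        Finset.mul_prod_erase (univ : Finset (ZMod p)) (fun a => X - C a) (mem_univ 0)
    _ = X ^ p - X := h
    _ = X * (X ^ (p - 1) - 1) := by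
        rw [mul_sub, mul_one, ← pow_succ', Nat.sub_add_cancel hp1]

section
variable {p : ℕ} [Fact p.Prime] {K : Type*} [Field K] (φ : ZMod p →+* K)

theorem aux_reindex {M : Type*} [CommMonoid M] (f : ZMod p → M) :
    ∏ m ∈ Finset.Icc (1 : ℤ) ((p : ℤ) - 1), f ((m : ℤ) : ZMod p) =
      ∏ a ∈ (univ : Finset (ZMod p)).erase 0, f a := by
  have hp1 : 1 < p := (Fact.out : p.Prime).one_lt
  refine Finset.prod_nbij' (fun m => ((m : ℤ) : ZMod p)) (fun a => (a.val : ℤ)) ?_ ?_ ?_ ?_ ?_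
  · intro m hm
    simp only [Finset.mem_Icc] at hm
    simp only [Finset.mem_erase, Finset.mem_univ, and_true]
    rw [Ne, ZMod.intCast_zmod_eq_zero_iff_dvd]
    intro hdvd
    have := Int.le_of_dvd (by omega) hdvd
    omega
  · intro a ha
    simp only [Finset.mem_erase, Finset.mem_univ, and_true] at ha
    have h1 : a.val < p := ZMod.val_lt a
    have h2 : a.val ≠ 0 := fun h => ha (by rwa [← ZMod.val_eq_zero])
    simp only [Finset.mem_Icc]
    omega
  · intro m hm
    simp only [Finset.mem_Icc] at hm
    show ((((m : ℤ) : ZMod p)).val : ℤ) = m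
    rw [ZMod.val_intCast, Int.emod_eq_of_lt (by omega) (by omega)]
  · intro a ha
    push_cast
    simp [ZMod.natCast_val, ZMod.cast_id]
  · intro m hm
    rfl

theorem aux_two {M : Type*} [CommMonoid M] (g : ZMod p → M) (hp2 : (2 : ZMod p) ≠ 0) :
    ∏ a ∈ (univ : Finset (ZMod p)).erase 0, g (2 * a) =
      ∏ a ∈ (univ : Finset (ZMod p)).erase 0, g a := by
  refine Finset.prod_nbij' (fun a => 2 * a) (fun a => 2⁻¹ * a) ?_ ?_ ?_ ?_ ?_
  · intro a ha
    simp only [Finset.mem_erase, Finset.mem_univ, and_true] at ha ⊢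
    exact mul_ne_zero hp2 ha
  · intro a ha
    simp only [Finset.mem_erase, Finset.mem_univ, and_true] at ha ⊢
    exact mul_ne_zero (inv_ne_zero hp2) ha
  · intro a _; show 2⁻¹ * (2 * a) = a; rw [← mul_assoc, inv_mul_cancel₀ hp2, one_mul]
  · intro a _; show 2 * (2⁻¹ * a) = a; rw [← mul_assoc, mul_inv_cancel₀ hp2, one_mul]
  · intro a _; rfl



theorem aux_mapped_univ :
    ∏ a : ZMod p, (X - C (φ a)) = X ^ p - X := by
  have h := congrArg (Polynomial.map φ) (prod_univ_X_sub_C (ZMod p))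
  rw [Polynomial.map_prod, ZMod.card] at h
  simpa using h

theorem aux_mapped_erase :
    ∏ a ∈ ((univ : Finset (ZMod p)).erase 0), (X - C (φ a)) = X ^ (p - 1) - 1 := by
  have h := congrArg (Polynomial.map φ) (zmod_prod_erase p)
  rw [Polynomial.map_prod] at h
  simpa using h

theorem aux_B {s : K} (hs : s ≠ 0) (hsp : s ^ p = -s) :
    ∏ a : ZMod p, (X - C (φ a * s)) = X ^ p + X := by
  have h := aux_mapped_univ φ
  calc ∏ a : ZMod p, (X - C (φ a * s))
      = ∏ a : ZMod p, (C s * (C s⁻¹ * X - C (φ a))) := by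
        refine Finset.prod_congr rfl fun a _ => ?_
        rw [mul_sub, ← mul_assoc, ← C_mul, mul_inv_cancel₀ hs, C_1, one_mul, ← C_mul,
          mul_comm s (φ a)]
    _ = C s ^ p * ∏ a : ZMod p, (C s⁻¹ * X - C (φ a)) := by
        rw [Finset.prod_mul_distrib, Finset.prod_const, Finset.card_univ, ZMod.card]
    _ = C s ^ p * aeval (C s⁻¹ * X) (∏ a : ZMod p, (X - C (φ a))) := by
        rw [map_prod]
        simp
    _ = C s ^ p * ((C s⁻¹ * X) ^ p - C s⁻¹ * X) := by rw [h]; simp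
    _ = X ^ p + X := by
        rw [mul_sub, mul_pow, ← mul_assoc, ← mul_assoc]
        have e1 : (C s : K[X]) ^ p * C s⁻¹ ^ p = 1 := by
          rw [← mul_pow, ← C_mul, mul_inv_cancel₀ hs, C_1, one_pow]
        have e2 : (C s : K[X]) ^ p * C s⁻¹ = -1 := by
          rw [← C_pow, hsp, ← C_mul, neg_mul, mul_inv_cancel₀ hs, C_neg, C_1]
        rw [e1, e2, one_mul, neg_one_mul, sub_neg_eq_add]

theorem aux_B' {s : K} (hs : s ≠ 0) (hsp : s ^ p = -s) (c : K) :
    ∏ a : ZMod p, (X - C (c + φ a * s)) = (X - C c) ^ p + (X - C c) := by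
  calc ∏ a : ZMod p, (X - C (c + φ a * s))
      = aeval (X - C c) (∏ a : ZMod p, (X - C (φ a * s))) := by
        rw [map_prod]
        refine Finset.prod_congr rfl fun a _ => ?_
        simp [sub_sub, add_comm]
    _ = aeval (X - C c) ((X : K[X]) ^ p + X) := by rw [aux_B φ hs hsp]
    _ = (X - C c) ^ p + (X - C c) := by simp

theorem aux_shift [CharP K p] {s : K} (hs : s ≠ 0) (hsp : s ^ p = -s) (a : ZMod p) :
    ∏ b : ZMod p, (X - C (φ a + φ b * s)) = X ^ p + X - C (φ (2 * a)) := by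
  rw [aux_B' φ hs hsp (φ a), sub_pow_char, ← C_pow, ← map_pow φ, ZMod.pow_card]
  rw [two_mul, map_add, C_add]
  ring

theorem aux_main [CharP K p] (hodd : Odd p) {s : K} (hs : s ≠ 0) (hsp : s ^ p = -s) :
    ((X : K[X]) ^ (p - 1) - 1) *
        ∏ a ∈ (univ : Finset (ZMod p)).erase 0, ∏ b ∈ (univ : Finset (ZMod p)).erase 0,
          (X - C (φ a + φ b * s)) =
      ((X : K[X]) ^ p + X) ^ (p - 1) - 1 := by
  have hp2 : (2 : ZMod p) ≠ 0 := by
    have : ((2 : ℕ) : ZMod p) = (2 : ZMod p) := by norm_num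
    rw [← this, Ne, ZMod.natCast_eq_zero_iff]
    intro h
    have h1 := Nat.le_of_dvd (by norm_num) h
    have hp1 : 1 < p := (Fact.out : p.Prime).one_lt
    have h2 := Nat.odd_iff.mp hodd
    omega
  calc ((X : K[X]) ^ (p - 1) - 1) *
        ∏ a ∈ (univ : Finset (ZMod p)).erase 0, ∏ b ∈ (univ : Finset (ZMod p)).erase 0,
          (X - C (φ a + φ b * s))
      = (∏ a ∈ (univ : Finset (ZMod p)).erase 0, (X - C (φ a))) *
        ∏ a ∈ (univ : Finset (ZMod p)).erase 0, ∏ b ∈ (univ : Finset (ZMod p)).erase 0,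
          (X - C (φ a + φ b * s)) := by rw [aux_mapped_erase φ]
    _ = ∏ a ∈ (univ : Finset (ZMod p)).erase 0,
          ((X - C (φ a)) * ∏ b ∈ (univ : Finset (ZMod p)).erase 0,
            (X - C (φ a + φ b * s))) := by rw [← Finset.prod_mul_distrib]
    _ = ∏ a ∈ (univ : Finset (ZMod p)).erase 0, ∏ b : ZMod p, (X - C (φ a + φ b * s)) := by
        refine Finset.prod_congr rfl fun a _ => ?_
        have h0 := Finset.mul_prod_erase (univ : Finset (ZMod p))
          (fun b => (X : K[X]) - C (φ a + φ b * s)) (mem_univ 0)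
        simp only [map_zero, zero_mul, add_zero] at h0
        rw [← h0]
    _ = ∏ a ∈ (univ : Finset (ZMod p)).erase 0, ((X : K[X]) ^ p + X - C (φ (2 * a))) := by
        exact Finset.prod_congr rfl fun a _ => aux_shift φ hs hsp a
    _ = ∏ c ∈ (univ : Finset (ZMod p)).erase 0, ((X : K[X]) ^ p + X - C (φ c)) :=
        aux_two (fun c => (X : K[X]) ^ p + X - C (φ c)) hp2
    _ = aeval ((X : K[X]) ^ p + X)
          (∏ c ∈ (univ : Finset (ZMod p)).erase 0, ((X : K[X]) - C (φ c))) := by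
        rw [map_prod]
        simp
    _ = ((X : K[X]) ^ p + X) ^ (p - 1) - 1 := by rw [aux_mapped_erase φ]; simp

end

theorem stmt_5 (p : ℕ) [Fact p.Prime] (hodd : Odd p) (d : ℤ) (hd : ¬ (p : ℤ) ∣ d)
    (hleg : legendreSym p d = -1) :
    (p : (Zsqrtd d)[X]) ∣
      (X ^ (p - 1) - 1) *
        (∏ m ∈ Finset.Icc (1 : ℤ) ((p : ℤ) - 1), ∏ n ∈ Finset.Icc (1 : ℤ) ((p : ℤ) - 1),
          (X - C (⟨m, n⟩ : Zsqrtd d)))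
      - ((X ^ p + X) ^ (p - 1) - 1) := by
  classical
  have hp : p.Prime := Fact.out
  have hp1 : 1 < p := hp.one_lt
  have hpne2 : p ≠ 2 := by have := Nat.odd_iff.mp hodd; omega
  set K := GaloisField p 2 with hK
  haveI : Fintype K := Fintype.ofFinite K
  set φ : ZMod p →+* K := algebraMap (ZMod p) K with hφdef
  have hφ : Function.Injective φ := φ.injective
  have cardK : Fintype.card K = p ^ 2 := by
    have := GaloisField.card p 2 (by norm_num)
    rwa [Nat.card_eq_fintype_card] at this
  have hd0 : ((d : ZMod p)) ≠ 0 := by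
    rw [Ne, ZMod.intCast_zmod_eq_zero_iff_dvd]; exact hd
  have hdφ : ((d : K)) = φ ((d : ZMod p)) := (map_intCast φ d).symm
  have hdK : ((d : K)) ≠ 0 := by
    rw [hdφ]
    intro h
    exact hd0 (hφ (by rw [h, map_zero]))
  have heuler : ((d : ZMod p)) ^ (p / 2) = -1 := by
    have h := legendreSym.eq_pow p d
    rw [hleg] at h
    push_cast at h
    exact h.symm
  have hchar2 : ringChar K ≠ 2 := by rw [ringChar.eq K p]; exact hpne2
  have hsq : IsSquare (d : K) := by
    rw [FiniteField.isSquare_iff hchar2 hdK, cardK]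
    obtain ⟨k, hk⟩ := hodd
    obtain ⟨m, hm⟩ : ∃ m, k * k = m := ⟨k * k, rfl⟩
    have hdiv : p ^ 2 / 2 = (p / 2) * (p + 1) := by
      subst hk
      have e1 : (2 * k + 1) / 2 = k := by omega
      have e2 : (2 * k + 1) ^ 2 = 4 * m + 4 * k + 1 := by rw [← hm]; ring
      have e3 : k * (2 * k + 1 + 1) = 2 * m + 2 * k := by rw [← hm]; ring
      rw [e1, e2, e3]
      omega
    rw [hdiv, pow_mul]
    have hdp : (d : K) ^ (p / 2) = -1 := by
      have := congrArg φ heuler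
      rw [map_pow, ← hdφ] at this
      simpa using this
    rw [hdp]
    exact Even.neg_one_pow ⟨k + 1, by omega⟩
  obtain ⟨s, hs2⟩ := hsq
  have hs0 : s ≠ 0 := fun h => hdK (by rw [hs2, h, mul_zero])
  set ρ : Zsqrtd d →+* K := Zsqrtd.lift ⟨s, hs2.symm⟩ with hρdef
  have hsφ : ∀ t : ZMod p, s ≠ φ t := by
    intro t ht
    have : (d : ZMod p) = t * t := by
      apply hφ
      rw [map_mul, ← ht, ← hs2, hdφ]
    exact (legendreSym.eq_neg_one_iff p).mp hleg ⟨t, this⟩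
  have hsp : s ^ p = -s := by
    have hsq2 : s ^ p * s ^ p = s * s := by
      rw [← mul_pow, ← hs2, hdφ, ← map_pow, ZMod.pow_card, ← hdφ, hs2]
    rcases mul_self_eq_mul_self_iff.mp hsq2 with h | h
    · exfalso
      have hprod : ∏ a : ZMod p, (s - φ a) = 0 := by
        have h2 := congrArg (eval s) (aux_mapped_univ φ)
        rw [eval_prod] at h2
        simpa [h] using h2
      obtain ⟨a, -, ha⟩ := Finset.prod_eq_zero_iff.mp hprod
      exact hsφ a (sub_eq_zero.mp ha)
    · exact h
  -- reduce to coefficients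
  rw [← Polynomial.C_eq_natCast, Polynomial.C_dvd_iff_dvd_coeff]
  intro i
  have hmapzero : Polynomial.map ρ
      ((X ^ (p - 1) - 1) *
        (∏ m ∈ Finset.Icc (1 : ℤ) ((p : ℤ) - 1), ∏ n ∈ Finset.Icc (1 : ℤ) ((p : ℤ) - 1),
          (X - C (⟨m, n⟩ : Zsqrtd d)))
      - ((X ^ p + X) ^ (p - 1) - 1)) = 0 := by
    simp only [Polynomial.map_sub, Polynomial.map_mul, Polynomial.map_pow, Polynomial.map_add,
      Polynomial.map_one, Polynomial.map_X, Polynomial.map_prod, Polynomial.map_C]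
    rw [sub_eq_zero]
    have hre : ∏ m ∈ Finset.Icc (1 : ℤ) ((p : ℤ) - 1), ∏ n ∈ Finset.Icc (1 : ℤ) ((p : ℤ) - 1),
        ((X : K[X]) - C (ρ (⟨m, n⟩ : Zsqrtd d))) =
        ∏ a ∈ (univ : Finset (ZMod p)).erase 0, ∏ b ∈ (univ : Finset (ZMod p)).erase 0,
          ((X : K[X]) - C (φ a + φ b * s)) := by
      have inner : ∀ m : ℤ, ∏ n ∈ Finset.Icc (1 : ℤ) ((p : ℤ) - 1),
          ((X : K[X]) - C (ρ (⟨m, n⟩ : Zsqrtd d))) =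
          ∏ b ∈ (univ : Finset (ZMod p)).erase 0,
            ((X : K[X]) - C (φ ((m : ℤ) : ZMod p) + φ b * s)) := by
        intro m
        rw [← aux_reindex (p := p) (fun b => (X : K[X]) - C (φ ((m : ℤ) : ZMod p) + φ b * s))]
        refine Finset.prod_congr rfl fun n _ => ?_
        have : ρ (⟨m, n⟩ : Zsqrtd d) = φ ((m : ℤ) : ZMod p) + φ ((n : ℤ) : ZMod p) * s := by
          simp [hρdef, Zsqrtd.lift_apply_apply, map_intCast]
        rw [this]
      calc ∏ m ∈ Finset.Icc (1 : ℤ) ((p : ℤ) - 1), ∏ n ∈ Finset.Icc (1 : ℤ) ((p : ℤ) - 1),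
            ((X : K[X]) - C (ρ (⟨m, n⟩ : Zsqrtd d)))
          = ∏ m ∈ Finset.Icc (1 : ℤ) ((p : ℤ) - 1),
              ∏ b ∈ (univ : Finset (ZMod p)).erase 0,
                ((X : K[X]) - C (φ ((m : ℤ) : ZMod p) + φ b * s)) :=
            Finset.prod_congr rfl fun m _ => inner m
        _ = _ := aux_reindex (p := p)
              (fun a => ∏ b ∈ (univ : Finset (ZMod p)).erase 0,
                ((X : K[X]) - C (φ a + φ b * s)))
    rw [hre]
    exact aux_main φ hodd hs0 hsp
  have hz : ρ (((X ^ (p - 1) - 1) *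
        (∏ m ∈ Finset.Icc (1 : ℤ) ((p : ℤ) - 1), ∏ n ∈ Finset.Icc (1 : ℤ) ((p : ℤ) - 1),
          (X - C (⟨m, n⟩ : Zsqrtd d)))
      - ((X ^ p + X) ^ (p - 1) - 1)).coeff i) = 0 := by
    have h2 := congrArg (fun g => g.coeff i) hmapzero
    simpa only [Polynomial.coeff_map, Polynomial.coeff_zero] using h2
  set z := ((X ^ (p - 1) - 1) *
        (∏ m ∈ Finset.Icc (1 : ℤ) ((p : ℤ) - 1), ∏ n ∈ Finset.Icc (1 : ℤ) ((p : ℤ) - 1),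
          (X - C (⟨m, n⟩ : Zsqrtd d)))
      - ((X ^ p + X) ^ (p - 1) - 1)).coeff i with hzdef
  rw [show ((p : ℕ) : Zsqrtd d) = ((p : ℤ) : Zsqrtd d) from (Int.cast_natCast p).symm,
    Zsqrtd.intCast_dvd]
  have hz' : (z.re : K) + (z.im : K) * s = 0 := by
    rw [hρdef, Zsqrtd.lift_apply_apply] at hz
    exact hz
  have hre' : (z.re : K) = φ ((z.re : ZMod p)) := (map_intCast φ z.re).symm
  have him' : (z.im : K) = φ ((z.im : ZMod p)) := (map_intCast φ z.im).symm
  have him : ((z.im : ZMod p)) = 0 := by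
    by_contra hi
    have hφi : φ ((z.im : ZMod p)) ≠ 0 := fun h => hi (hφ (by rw [h, map_zero]))
    apply hsφ (-((z.re : ZMod p)) * ((z.im : ZMod p))⁻¹)
    rw [map_mul, map_neg, map_inv₀]
    rw [hre', him'] at hz'
    have this' : -(φ ((z.re : ZMod p))) = s * φ ((z.im : ZMod p)) := by linear_combination -hz'
    rw [this', mul_assoc, mul_inv_cancel₀ hφi, mul_one]
  have hzim : (p : ℤ) ∣ z.im := by rwa [← ZMod.intCast_zmod_eq_zero_iff_dvd]
  have hzre : (p : ℤ) ∣ z.re := by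
    rw [← ZMod.intCast_zmod_eq_zero_iff_dvd]
    apply hφ
    rw [map_zero, ← hre']
    have : (z.im : K) = 0 := by rw [him', him, map_zero]
    rw [this, zero_mul, add_zero] at hz'
    exact hz'
  exact ⟨hzre, hzim⟩
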